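/- There exist constants C₀ > 0 and t₀ ≥ 1 such that for all a, b, c > 0 with t := ac/b² ≥ t₀ one has σ ≤ C₀ a t^{−1/2} and a/4 ≤ μ₁ ≤ C₀ a. In particular, for every K > 0 there exists t₁ ≥ 1 such that ac/b² ≥ t₁ implies μ₁ ≥ K σ. -/

import Mathlib

open Matrix

noncomputable section

abbrev M3 : Type := Matrix (Fin 3) (Fin 3) ℝ

def sstar (a b c : ℝ) : ℝ := (b + Real.sqrt (b ^ 2 + 24 * a * c)) / (4 * c)

/-- φ(X) = A + BX + CX² with A = a/2 + s_*²c/3, B = s_*b/9 − 2s_*²c/3, C = s_*²c/6. -/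
def phiF (a b c X : ℝ) : ℝ :=
  (a/2 + (sstar a b c) ^ 2 * c / 3)
    + (sstar a b c * b / 9 - 2 * (sstar a b c) ^ 2 * c / 3) * X
    + ((sstar a b c) ^ 2 * c / 6) * X ^ 2

/-- μ₁ = min_{X ∈ [0,1]} φ(X). -/
def mu1 (a b c : ℝ) : ℝ := sInf (phiF a b c '' Set.Icc 0 1)

/-- σ = s_* b / 18. -/
def sigmaP (a b c : ℝ) : ℝ := sstar a b c * b / 18

lemma sstar_pos (a b c : ℝ) (ha : 0 < a) (hb : 0 < b) (hc : 0 < c) :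
    0 < sstar a b c := by
  unfold sstar
  have := Real.sqrt_nonneg (b ^ 2 + 24 * a * c)
  positivity

lemma sstar_key (a b c : ℝ) (ha : 0 < a) (hb : 0 < b) (hc : 0 < c) :
    2 * c * (sstar a b c) ^ 2 = b * sstar a b c + 3 * a := by
  have h0 : (0:ℝ) ≤ b ^ 2 + 24 * a * c := by positivity
  have hs : Real.sqrt (b ^ 2 + 24 * a * c) ^ 2 = b ^ 2 + 24 * a * c := Real.sq_sqrt h0
  unfold sstar
  field_simp
  rw [show b ^ 2 + c * 24 * a = b ^ 2 + 24 * a * c by ring]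
  nlinarith [hs]

/-- p·u ≤ 2a where p = b·s*, u = √(ac/b²), assuming t ≥ 1. -/
lemma pu_le (a b c : ℝ) (ha : 0 < a) (hb : 0 < b) (hc : 0 < c)
    (ht : 1 ≤ a * c / b ^ 2) :
    b * sstar a b c * Real.sqrt (a * c / b ^ 2) ≤ 2 * a := by
  set s := sstar a b c with hs
  have hsp : 0 < s := sstar_pos a b c ha hb hc
  have hkey := sstar_key a b c ha hb hc
  set u := Real.sqrt (a * c / b ^ 2) with hu
  have hu1 : 1 ≤ u := by
    rw [hu, show (1:ℝ) = Real.sqrt 1 by simp]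
    exact Real.sqrt_le_sqrt ht
  have hu2 : u ^ 2 = a * c / b ^ 2 := Real.sq_sqrt (by positivity)
  have hb2 : b ^ 2 ≠ 0 := by positivity
  have hac : a * c = u ^ 2 * b ^ 2 := by
    field_simp at hu2; linarith [hu2]
  -- 2 (b s)² u² = a (b s) + 3 a²
  have h1 : 2 * (b * s) ^ 2 * u ^ 2 = a * (b * s) + 3 * a ^ 2 := by
    have h2 : 2 * c * (b * s) ^ 2 = b ^ 2 * (b * s) + 3 * a * b ^ 2 := by
      nlinarith [hkey]
    have h3 : a * (2 * c * (b * s) ^ 2) = a * (b ^ 2 * (b * s) + 3 * a * b ^ 2) := by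
      rw [h2]
    have hb2p : (0:ℝ) < b ^ 2 := by positivity
    nlinarith [h3, hac]
  nlinarith [h1, mul_pos (mul_pos hb hsp) (lt_of_lt_of_le one_pos hu1),
    mul_le_mul_of_nonneg_left hu1 (le_of_lt (mul_pos ha (mul_pos hb hsp))),
    sq_nonneg (b * s * u - 2 * a), sq_nonneg (b * s * u + a)]

lemma p_le (a b c : ℝ) (ha : 0 < a) (hb : 0 < b) (hc : 0 < c)
    (ht : 1 ≤ a * c / b ^ 2) : b * sstar a b c ≤ 2 * a := by
  have h := pu_le a b c ha hb hc ht
  have hu1 : 1 ≤ Real.sqrt (a * c / b ^ 2) := by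
    rw [show (1:ℝ) = Real.sqrt 1 by simp]
    exact Real.sqrt_le_sqrt ht
  have hp : 0 < b * sstar a b c := mul_pos hb (sstar_pos a b c ha hb hc)
  nlinarith

lemma mu1_lb (a b c : ℝ) (ha : 0 < a) (hb : 0 < b) (hc : 0 < c) :
    a / 4 ≤ mu1 a b c := by
  refine le_csInf ⟨phiF a b c 0, ⟨0, by norm_num, rfl⟩⟩ ?_
  rintro y ⟨X, ⟨hX0, hX1⟩, rfl⟩
  have hsp : 0 < sstar a b c := sstar_pos a b c ha hb hc
  have hkey := sstar_key a b c ha hb hc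
  unfold phiF
  nlinarith [mul_nonneg (mul_pos hb hsp).le (mul_nonneg (sub_nonneg.2 hX1) (by linarith : (0:ℝ) ≤ 3 - X)),
    mul_nonneg ha.le (mul_nonneg (sub_nonneg.2 hX1) (by linarith : (0:ℝ) ≤ 3 - X)),
    mul_pos hb hsp, sq_nonneg (X - 1)]

lemma mu1_bddBelow (a b c : ℝ) (ha : 0 < a) (hb : 0 < b) (hc : 0 < c) :
    BddBelow (phiF a b c '' Set.Icc 0 1) := by
  refine ⟨a / 4, ?_⟩
  rintro y ⟨X, ⟨hX0, hX1⟩, rfl⟩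
  have hsp : 0 < sstar a b c := sstar_pos a b c ha hb hc
  have hkey := sstar_key a b c ha hb hc
  unfold phiF
  nlinarith [mul_nonneg (mul_pos hb hsp).le (mul_nonneg (sub_nonneg.2 hX1) (by linarith : (0:ℝ) ≤ 3 - X)),
    mul_nonneg ha.le (mul_nonneg (sub_nonneg.2 hX1) (by linarith : (0:ℝ) ≤ 3 - X)),
    mul_pos hb hsp, sq_nonneg (X - 1)]

lemma mu1_ub (a b c : ℝ) (ha : 0 < a) (hb : 0 < b) (hc : 0 < c)
    (ht : 1 ≤ a * c / b ^ 2) : mu1 a b c ≤ 2 * a := by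
  have h0 : mu1 a b c ≤ phiF a b c 0 :=
    csInf_le (mu1_bddBelow a b c ha hb hc) ⟨0, by norm_num, rfl⟩
  have hkey := sstar_key a b c ha hb hc
  have hp := p_le a b c ha hb hc ht
  have : phiF a b c 0 ≤ 2 * a := by
    unfold phiF; nlinarith
  linarith

/-- There are C₀ > 0 and t₀ ≥ 1 such that whenever t = ac/b² ≥ t₀ one has
σ ≤ C₀ a t^{−1/2} and a/4 ≤ μ₁ ≤ C₀ a; consequently, for every K > 0 there is
t₁ ≥ 1 such that ac/b² ≥ t₁ implies μ₁ ≥ K σ. -/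
theorem stmt11 :
    (∃ C₀ : ℝ, 0 < C₀ ∧ ∃ t₀ : ℝ, 1 ≤ t₀ ∧
      ∀ a b c : ℝ, 0 < a → 0 < b → 0 < c → t₀ ≤ a * c / b ^ 2 →
        sigmaP a b c ≤ C₀ * a * (a * c / b ^ 2) ^ (-(1:ℝ)/2) ∧
        a / 4 ≤ mu1 a b c ∧ mu1 a b c ≤ C₀ * a) ∧
    (∀ K : ℝ, 0 < K → ∃ t₁ : ℝ, 1 ≤ t₁ ∧
      ∀ a b c : ℝ, 0 < a → 0 < b → 0 < c → t₁ ≤ a * c / b ^ 2 →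
        K * sigmaP a b c ≤ mu1 a b c) := by
  have sigma_bd : ∀ a b c : ℝ, 0 < a → 0 < b → 0 < c → 1 ≤ a * c / b ^ 2 →
      sigmaP a b c ≤ 2 * a * (a * c / b ^ 2) ^ (-(1:ℝ)/2) := by
    intro a b c ha hb hc ht
    have htp : (0:ℝ) < a * c / b ^ 2 := by positivity
    have hup : 0 < Real.sqrt (a * c / b ^ 2) := Real.sqrt_pos.2 htp
    have hrp : (a * c / b ^ 2) ^ (-(1:ℝ)/2) = (Real.sqrt (a * c / b ^ 2))⁻¹ := by
      rw [show (-(1:ℝ)/2) = -(1/2) by norm_num, Real.rpow_neg htp.le,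
        ← Real.sqrt_eq_rpow]
    rw [hrp]
    have hpu := pu_le a b c ha hb hc ht
    have h2 : b * sstar a b c ≤ 2 * a / Real.sqrt (a * c / b ^ 2) :=
      (le_div_iff₀ hup).2 hpu
    have hsp : 0 < sstar a b c := sstar_pos a b c ha hb hc
    rw [div_eq_mul_inv] at h2
    unfold sigmaP
    nlinarith [mul_pos hb hsp]
  constructor
  · refine ⟨2, by norm_num, 1, le_refl 1, ?_⟩
    intro a b c ha hb hc ht
    exact ⟨sigma_bd a b c ha hb hc ht, mu1_lb a b c ha hb hc, mu1_ub a b c ha hb hc ht⟩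
  · intro K hK
    refine ⟨max 1 (K ^ 2), le_max_left _ _, ?_⟩
    intro a b c ha hb hc ht
    have ht1 : 1 ≤ a * c / b ^ 2 := le_trans (le_max_left _ _) ht
    have htK : K ^ 2 ≤ a * c / b ^ 2 := le_trans (le_max_right _ _) ht
    have hpu := pu_le a b c ha hb hc ht1
    have hsp : 0 < sstar a b c := sstar_pos a b c ha hb hc
    have huK : K ≤ Real.sqrt (a * c / b ^ 2) := by
      calc K ≤ Real.sqrt (K ^ 2) := by
              rw [Real.sqrt_sq hK.le]
          _ ≤ Real.sqrt (a * c / b ^ 2) := Real.sqrt_le_sqrt htK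
    have hlb := mu1_lb a b c ha hb hc
    -- K * σ = K * (b s)/18 ≤ u * (b s) / 18 ≤ 2a/18 ≤ a/4 ≤ μ₁
    have h1 : K * (b * sstar a b c) ≤ Real.sqrt (a * c / b ^ 2) * (b * sstar a b c) :=
      mul_le_mul_of_nonneg_right huK (mul_pos hb hsp).le
    unfold sigmaP
    nlinarith [hpu, h1]
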